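/- Let a be a bracket vector, let X be a representation in C_a, and let Z be a direct sum of interval representations of the form E^{i(i+a_i−1)} with a_i ≥ 1. Then every extension of Z by X is trivial (split). -/

import Mathlib

open Classical

/-- A representation of a quiver (given by vertex type `ι`, arrow type `E`,
and source/target maps `s t : E → ι`) over a field `K`: a finite-dimensional
`K`-vector space at each vertex and a linear map along each arrow. -/
structure QRep (K : Type) [Field K] {ι : Type} {E : Type} (s t : E → ι) : Type 1 where
  V : ι → Type
  [addV : ∀ i, AddCommGroup (V i)]
  [modV : ∀ i, Module K (V i)]
  [fdV : ∀ i, FiniteDimensional K (V i)]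
  f : ∀ e : E, V (s e) →ₗ[K] V (t e)

attribute [instance] QRep.addV QRep.modV QRep.fdV

namespace QRep

variable {K : Type} [Field K] {ι E : Type} {s t : E → ι}

/-- A morphism of representations: linear maps at each vertex commuting with the arrow maps. -/
structure Hom (X Y : QRep K s t) : Type where
  φ : ∀ i, X.V i →ₗ[K] Y.V i
  comm : ∀ e, (Y.f e).comp (φ (s e)) = (φ (t e)).comp (X.f e)

def Hom.Surjective {X Y : QRep K s t} (f : Hom X Y) : Prop := ∀ i, Function.Surjective (f.φ i)

def Hom.Injective {X Y : QRep K s t} (f : Hom X Y) : Prop := ∀ i, Function.Injective (f.φ i)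

/-- Two representations are isomorphic if there is a morphism bijective at every vertex. -/
def Iso (X Y : QRep K s t) : Prop := ∃ f : Hom X Y, ∀ i, Function.Bijective (f.φ i)

/-- Direct sum of two representations, taken vertexwise. -/
def dsum (X Y : QRep K s t) : QRep K s t where
  V i := X.V i × Y.V i
  f e := (X.f e).prodMap (Y.f e)

instance : Module.Finite K PUnit :=
  Module.Finite.of_surjective (0 : K →ₗ[K] PUnit) (fun x => ⟨0, Subsingleton.elim _ _⟩)

/-- The zero representation. -/
def zero : QRep K s t where
  V _ := PUnit
  f _ := 0

/-- A representation is zero if all its vector spaces are zero. -/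
def IsZero (X : QRep K s t) : Prop := ∀ i, ∀ x : X.V i, x = 0

/-- Indecomposable: nonzero, and not isomorphic to a direct sum of two nonzero representations. -/
def Indec (X : QRep K s t) : Prop :=
  ¬ X.IsZero ∧ ∀ A B : QRep K s t, Iso X (A.dsum B) → A.IsZero ∨ B.IsZero

/-- Direct sum of a finite list of representations. -/
noncomputable def dsumList : List (QRep K s t) → QRep K s t
  | [] => zero
  | X :: L => X.dsum (dsumList L)

/-- An extension `Y` of `Z` by `X`: an injective morphism `X → Y` and a surjective
morphism `Y → Z` whose vertexwise kernel is the image of `X`. -/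
structure Extension (X Y Z : QRep K s t) : Type where
  incl : Hom X Y
  proj : Hom Y Z
  inj : ∀ i, Function.Injective (incl.φ i)
  surj : ∀ i, Function.Surjective (proj.φ i)
  exact : ∀ i, LinearMap.ker (proj.φ i) = LinearMap.range (incl.φ i)

/-- An extension is trivial (split) if there is a morphism `Y → X` restricting to the identity on `X`. -/
def Extension.Trivial {X Y Z : QRep K s t} (E : Extension X Y Z) : Prop :=
  ∃ r : Hom Y X, ∀ i x, r.φ i (E.incl.φ i x) = x

/-- A subrepresentation of `Y`: a subspace at each vertex, stable under the arrow maps. -/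
structure Sub (Y : QRep K s t) : Type where
  p : ∀ i, Submodule K (Y.V i)
  stable : ∀ e, ∀ x ∈ p (s e), Y.f e x ∈ p (t e)

def Sub.toRep {Y : QRep K s t} (S : Sub Y) : QRep K s t where
  V i := S.p i
  f e := (Y.f e).restrict (S.stable e)

/-- The quotient representation `Y/X`. -/
def Sub.quot {Y : QRep K s t} (S : Sub Y) : QRep K s t where
  V i := Y.V i ⧸ S.p i
  f e := Submodule.mapQ (S.p (s e)) (S.p (t e)) (Y.f e) (fun x hx => S.stable e x hx)

/-- The inclusion morphism of a subrepresentation. -/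
def Sub.incl {Y : QRep K s t} (S : Sub Y) : Hom S.toRep Y where
  φ i := (S.p i).subtype
  comm e := by ext x; rfl

/-- The quotient morphism onto the quotient representation. -/
def Sub.mkQ {Y : QRep K s t} (S : Sub Y) : Hom Y S.quot where
  φ i := (S.p i).mkQ
  comm e := by ext x; first | rfl | simp [Sub.quot, Submodule.mapQ_apply, LinearMap.comp_apply]

/-- The space of morphisms between two representations, as a subspace of the product of Hom spaces. -/
def HomSpace (X Y : QRep K s t) : Submodule K (∀ i, X.V i →ₗ[K] Y.V i) where
  carrier := {φ | ∀ e, (Y.f e).comp (φ (s e)) = (φ (t e)).comp (X.f e)}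
  add_mem' := by
    intro a b ha hb e
    simp only [Set.mem_setOf_eq] at ha hb
    simp [LinearMap.comp_add, LinearMap.add_comp, ha e, hb e]
  zero_mem' := by intro e; simp
  smul_mem' := by
    intro c a ha e
    simp only [Set.mem_setOf_eq] at ha
    simp [LinearMap.comp_smul, LinearMap.smul_comp, ha e]

end QRep
/-- The source of the `e`-th arrow of the linearly oriented quiver `Aₙ`
(vertices `0,…,n-1`, arrows `e → e+1` for `0 ≤ e < n-1`; 0-based indexing). -/
def ASrc (n : ℕ) (e : Fin (n - 1)) : Fin n := ⟨e.val, by have := e.isLt; omega⟩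

/-- The target of the `e`-th arrow of `Aₙ`. -/
def ATgt (n : ℕ) (e : Fin (n - 1)) : Fin n := ⟨e.val + 1, by have := e.isLt; omega⟩

/-- Representations of the linearly oriented quiver `Aₙ`. -/
abbrev ARep (K : Type) [Field K] (n : ℕ) := QRep K (ASrc n) (ATgt n)

/-- The canonical map from `M` to a submodule `T`: the identity if `T = ⊤`, zero otherwise. -/
noncomputable def toSub {K M : Type} [Field K] [AddCommGroup M] [Module K M]
    (T : Submodule K M) : M →ₗ[K] T :=
  if h : T = ⊤ then LinearMap.codRestrict T LinearMap.id (fun x => by simp [h]) else 0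

/-- The vertex spaces of the interval representation `E^{ij}`: `K` for `i ≤ p ≤ j`, zero otherwise. -/
def ESub (K : Type) [Field K] (n i j : ℕ) (p : Fin n) : Submodule K K :=
  if i ≤ p.val ∧ p.val ≤ j then ⊤ else ⊥

/-- The interval representation `E^{ij}` of `Aₙ` (0-based): one-dimensional spaces at
vertices `i,…,j`, identity maps between consecutive ones, zero elsewhere. -/
noncomputable def Eij (K : Type) [Field K] (n i j : ℕ) : ARep K n where
  V p := ESub K n i j p
  f e := (toSub (ESub K n i j (ATgt n e))).comp (ESub K n i j (ASrc n e)).subtype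

/-- Direct sum of interval representations indexed by a list of pairs. -/
noncomputable def intervalSum (K : Type) [Field K] (n : ℕ) (L : List (ℕ × ℕ)) : ARep K n :=
  QRep.dsumList (L.map fun pr => Eij K n pr.1 pr.2)

/-- Membership of the pair `(i,j)` in `F_a = {(i,j) : i ≤ j < i + a_i}` (0-based;
`pr.2 < n` ensures the interval lies in the vertex range). -/
def condF (n : ℕ) (a : ℕ → ℕ) (pr : ℕ × ℕ) : Prop :=
  pr.1 ≤ pr.2 ∧ pr.2 < n ∧ pr.2 < pr.1 + a pr.1

/-- An object lies in the full additive subcategory determined by the interval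
representations `E^{ij}` with `cond (i,j)`, i.e. it is isomorphic to a finite direct sum
of such intervals. -/
def InCat (K : Type) [Field K] (n : ℕ) (cond : ℕ × ℕ → Prop) (X : ARep K n) : Prop :=
  ∃ L : List (ℕ × ℕ), (∀ pr ∈ L, cond pr) ∧ QRep.Iso X (intervalSum K n L)

/-- The subcategory of intervals satisfying `cond` is closed under quotients. -/
def QuotClosedCat (K : Type) [Field K] (n : ℕ) (cond : ℕ × ℕ → Prop) : Prop :=
  ∀ X Y : ARep K n, InCat K n cond X → (∃ f : QRep.Hom X Y, f.Surjective) → InCat K n cond Y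

/-- The subcategory of intervals satisfying `cond` is closed under extensions. -/
def ExtClosedCat (K : Type) [Field K] (n : ℕ) (cond : ℕ × ℕ → Prop) : Prop :=
  ∀ X Y Z : ARep K n, InCat K n cond X → InCat K n cond Z →
    Nonempty (QRep.Extension X Y Z) → InCat K n cond Y

/-- `a` is a bracket vector (membership in `M` stated separately): whenever
`1 ≤ j ≤ a i` (and `i + j` is a vertex), `j + a_{i+j} ≤ a_i`. 0-based indices. -/
def IsBracketVecN (n : ℕ) (a : ℕ → ℕ) : Prop :=
  ∀ i < n, ∀ j : ℕ, 1 ≤ j → j ≤ a i → i + j < n → j + a (i + j) ≤ a i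

section Aux

variable {K : Type} [Field K] {n : ℕ}

/-- elements of a `⊥`-case interval space are zero -/
theorem ESub_elem_zero {i j : ℕ} {p : Fin n} (h : ¬ (i ≤ p.val ∧ p.val ≤ j))
    (x : (Eij K n i j).V p) : x = 0 := by
  apply Subtype.ext
  have hx := x.2
  simp only [ESub, h, if_false] at hx
  exact (Submodule.mem_bot K).mp hx

theorem toSub_val {M : Type} [AddCommGroup M] [Module K M] (T : Submodule K M)
    (hT : T = ⊤) (c : M) : ((toSub T c : T) : M) = c := by
  rw [toSub, dif_pos hT]; rfl

theorem ESub_top {i j : ℕ} {p : Fin n} (h : i ≤ p.val ∧ p.val ≤ j) :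
    ESub K n i j p = ⊤ := by simp only [ESub, h, if_true, and_self]

/-- path maps along the quiver -/
noncomputable def pmap (W : ARep K n) (i : ℕ) :
    (k : ℕ) → (h : i + k < n) → (W.V ⟨i, by omega⟩ →ₗ[K] W.V ⟨i + k, h⟩)
  | 0, _ => LinearMap.id
  | k+1, h => (W.f ⟨i + k, by omega⟩).comp (pmap W i k (by omega))

theorem pmap_hom {W W' : ARep K n} (f : QRep.Hom W W') (i : ℕ) :
    ∀ (k : ℕ) (h : i + k < n) (x : W.V ⟨i, by omega⟩),
      f.φ ⟨i + k, h⟩ (pmap W i k h x) = pmap W' i k h (f.φ ⟨i, by omega⟩ x)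
  | 0, _, _ => rfl
  | k+1, h, x => by
    have hc := LinearMap.congr_fun (f.comm ⟨i + k, by omega⟩) (pmap W i k (by omega) x)
    have ih := pmap_hom f i k (by omega) x
    show f.φ ⟨i + (k+1), h⟩ ((W.f ⟨i + k, by omega⟩) (pmap W i k (by omega) x)) =
      (W'.f ⟨i + k, by omega⟩) (pmap W' i k (by omega) (f.φ ⟨i, by omega⟩ x))
    exact hc.symm.trans (congrArg _ ih)

theorem pmap_dsum (A B : ARep K n) (i : ℕ) :
    ∀ (k : ℕ) (h : i + k < n) (x : (A.dsum B).V ⟨i, by omega⟩),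
      pmap (A.dsum B) i k h x = (pmap A i k h x.1, pmap B i k h x.2)
  | 0, _, _ => rfl
  | k+1, h, x => by
    have ih := pmap_dsum A B i k (by omega) x
    show (A.dsum B).f ⟨i + k, by omega⟩ (pmap (A.dsum B) i k (by omega) x) = _
    rw [ih]; rfl

end Aux
section Aux2

variable {K : Type} [Field K] {n : ℕ}

theorem toSub_comp_surj (T1 T2 : Submodule K K) (h1 : T1 = ⊤) (h2 : T2 = ⊤) :
    Function.Surjective ((toSub T2).comp T1.subtype) := by
  subst h1; subst h2
  intro y
  exact ⟨⟨y.val, trivial⟩, Subtype.ext (toSub_val _ rfl _)⟩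

theorem Eij_f_surj {c d : ℕ} (e : Fin (n-1)) (h1 : c ≤ e.val) (h2 : e.val + 1 ≤ d) :
    Function.Surjective ((Eij K n c d).f e) :=
  toSub_comp_surj _ _
    (ESub_top (p := ASrc n e) ⟨by show c ≤ e.val; omega, by show e.val ≤ d; omega⟩)
    (ESub_top (p := ATgt n e) ⟨by show c ≤ e.val + 1; omega, by show e.val + 1 ≤ d; omega⟩)

theorem pmap_Eij_in_surj {c d i : ℕ} (hc : c ≤ i) :
    ∀ (k : ℕ) (h : i + k < n), i + k ≤ d → Function.Surjective (pmap (Eij K n c d) i k h)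
  | 0, _, _ => fun y => ⟨y, rfl⟩
  | k+1, h, hd => by
    have hlt : i + k < n := by omega
    have hld : i + k ≤ d := by omega
    have ih := pmap_Eij_in_surj hc k hlt hld
    have hs : Function.Surjective ((Eij K n c d).f ⟨i + k, by omega⟩) :=
      Eij_f_surj (c := c) (d := d) ⟨i + k, by omega⟩
        (by show c ≤ i + k; omega) (by show i + k + 1 ≤ d; omega)
    show Function.Surjective (((Eij K n c d).f ⟨i + k, by omega⟩).comp (pmap (Eij K n c d) i k (by omega)))
    exact hs.comp ih

theorem pmap_Eij_surj (c d : ℕ) {i k : ℕ} (h : i + k < n)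
    (hcd : c ≤ i + k → i + k ≤ d → c ≤ i) :
    Function.Surjective (pmap (Eij K n c d) i k h) := by
  by_cases hq : c ≤ i + k ∧ i + k ≤ d
  · exact pmap_Eij_in_surj (hcd hq.1 hq.2) k h hq.2
  · intro y
    refine ⟨0, ?_⟩
    rw [map_zero]
    exact (ESub_elem_zero (p := ⟨i + k, h⟩) hq y).symm

theorem pmap_zero_surj {i k : ℕ} (h : i + k < n) :
    Function.Surjective (pmap (QRep.zero : ARep K n) i k h) := by
  intro y
  exact ⟨PUnit.unit, Subsingleton.elim (α := PUnit) _ _⟩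

theorem pmap_dsum_surj {A B : ARep K n} {i k : ℕ} (h : i + k < n)
    (hA : Function.Surjective (pmap A i k h)) (hB : Function.Surjective (pmap B i k h)) :
    Function.Surjective (pmap (A.dsum B) i k h) := by
  intro y
  obtain ⟨x1, hx1⟩ := hA (Prod.fst y)
  obtain ⟨x2, hx2⟩ := hB (Prod.snd y)
  refine ⟨((x1, x2) : A.V ⟨i, by omega⟩ × B.V ⟨i, by omega⟩), ?_⟩
  refine (pmap_dsum A B i k h _).trans ?_
  show (pmap A i k h x1, pmap B i k h x2) = y
  rw [hx1, hx2]
  rfl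

theorem pmap_intervalSum_surj {i k : ℕ} (h : i + k < n) :
    ∀ (L : List (ℕ × ℕ)), (∀ pr ∈ L, pr.1 ≤ i + k → i + k ≤ pr.2 → pr.1 ≤ i) →
      Function.Surjective (pmap (intervalSum K n L) i k h)
  | [], _ => pmap_zero_surj h
  | pr :: L, hL => by
    show Function.Surjective (pmap ((Eij K n pr.1 pr.2).dsum (intervalSum K n L)) i k h)
    exact pmap_dsum_surj h
      (pmap_Eij_surj pr.1 pr.2 h (hL pr List.mem_cons_self))
      (pmap_intervalSum_surj h L
        (fun q hq => hL q (List.mem_cons_of_mem pr hq)))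

/-- the crucial surjectivity: for `X ∈ C_a` and a bracket vector `a`,
the path map from `i` to `i + a i` is surjective. -/
theorem pmap_X_surj (a : ℕ → ℕ) (hbr : IsBracketVecN n a) (X : ARep K n)
    (hX : InCat K n (condF n a) X) (i : ℕ) (hi : i < n) (h : i + a i < n) :
    Function.Surjective (pmap X i (a i) h) := by
  obtain ⟨L, hLF, f, hf⟩ := hX
  have hcond : ∀ pr ∈ L, pr.1 ≤ i + a i → i + a i ≤ pr.2 → pr.1 ≤ i := by
    intro pr hpr hc1 hc2
    by_contra hgt
    push_neg at hgt
    obtain ⟨hle, hlt, hF⟩ := hLF pr hpr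
    have hj0 : 1 ≤ pr.1 - i := by omega
    have hj1 : pr.1 - i ≤ a i := by omega
    have hbound := hbr i hi (pr.1 - i) hj0 hj1 (by omega)
    rw [show i + (pr.1 - i) = pr.1 by omega] at hbound
    omega
  have hsum := pmap_intervalSum_surj (K := K) h L hcond
  intro x'
  obtain ⟨s0, hs0⟩ := hsum (f.φ ⟨i + a i, h⟩ x')
  obtain ⟨x, hx⟩ := (hf ⟨i, by omega⟩).2 s0
  refine ⟨x, (hf ⟨i + a i, h⟩).1 ?_⟩
  rw [pmap_hom f i (a i) h x, hx, hs0]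

end Aux2
section Aux3

variable {K : Type} [Field K] {n : ℕ}

/-- the canonical generator of an interval representation at a vertex in its range -/
def gen (c d : ℕ) (p : Fin n) (hp : c ≤ p.val ∧ p.val ≤ d) : (Eij K n c d).V p :=
  ⟨1, by rw [ESub_top hp]; trivial⟩

theorem pmap_congr (W : ARep K n) (i : ℕ) {k k' : ℕ} (hkk : k = k')
    (h : i + k < n) (h' : i + k' < n) (x : W.V ⟨i, by omega⟩) :
    HEq (pmap W i k h x) (pmap W i k' h' x) := by subst hkk; rfl

theorem pmap_gen {c d i : ℕ} (hci : c ≤ i) (hid : i ≤ d) (hi : i < n) :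
    ∀ (k : ℕ) (h : i + k < n) (hd : i + k ≤ d),
      pmap (Eij K n c d) i k h (gen c d ⟨i, hi⟩ ⟨hci, hid⟩) =
        gen c d ⟨i + k, h⟩ ⟨by show c ≤ i + k; omega, hd⟩
  | 0, h, hd => rfl
  | k+1, h, hd => by
    show (Eij K n c d).f ⟨i + k, by omega⟩
      (pmap (Eij K n c d) i k (by omega) (gen c d ⟨i, hi⟩ ⟨hci, hid⟩)) = _
    rw [pmap_gen hci hid hi k (by omega) (by omega)]
    apply Subtype.ext
    exact toSub_val _ (ESub_top (p := ATgt n ⟨i + k, by omega⟩)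
      ⟨by show c ≤ i + k + 1; omega, by show i + k + 1 ≤ d; omega⟩) 1

/-- push a chosen vector at vertex `i` along the quiver through the window `[i, i+k0]`,
zero outside. -/
noncomputable def chainVec (Y : ARep K n) (i k0 : ℕ) (hi : i < n) (yi : Y.V ⟨i, hi⟩)
    (p : Fin n) : Y.V p :=
  if hp : i ≤ p.val ∧ p.val ≤ i + k0 then
    _root_.cast
      (congrArg Y.V (Fin.ext (show i + (p.val - i) = p.val by omega) :
        (⟨i + (p.val - i), by omega⟩ : Fin n) = p))
      (pmap Y i (p.val - i) (by omega) yi)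
  else 0

theorem chainVec_out (Y : ARep K n) (i k0 : ℕ) (hi : i < n) (yi : Y.V ⟨i, hi⟩)
    (p : Fin n) (hp : ¬ (i ≤ p.val ∧ p.val ≤ i + k0)) :
    chainVec Y i k0 hi yi p = 0 := by
  rw [chainVec, dif_neg hp]

theorem chainVec_eval (Y : ARep K n) (i k0 : ℕ) (hi : i < n) (yi : Y.V ⟨i, hi⟩)
    (k : ℕ) (h : i + k < n) (hk : k ≤ k0) :
    chainVec Y i k0 hi yi ⟨i + k, h⟩ = pmap Y i k h yi := by
  rw [chainVec, dif_pos (show i ≤ ((⟨i + k, h⟩ : Fin n) : ℕ) ∧ ((⟨i + k, h⟩ : Fin n) : ℕ) ≤ i + k0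
    from ⟨by show i ≤ i + k; omega, by show i + k ≤ i + k0; omega⟩)]
  apply eq_of_heq
  refine HEq.trans (cast_heq _ _) ?_
  exact pmap_congr Y i (by show i + k - i = k; omega) _ _ yi

theorem chainVec_step (Y : ARep K n) (i k0 : ℕ) (hi : i < n) (yi : Y.V ⟨i, hi⟩)
    (e : Fin (n-1)) (h1 : i ≤ e.val) (h2 : e.val + 1 ≤ i + k0) :
    Y.f e (chainVec Y i k0 hi yi (ASrc n e)) = chainVec Y i k0 hi yi (ATgt n e) := by
  obtain ⟨k, hk⟩ : ∃ k, e.val = i + k := ⟨e.val - i, by omega⟩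
  have hb : i + k < n - 1 := by omega
  have he : e = ⟨i + k, hb⟩ := Fin.ext hk
  subst he
  show Y.f ⟨i + k, hb⟩ (chainVec Y i k0 hi yi ⟨i + k, by omega⟩) =
    chainVec Y i k0 hi yi ⟨i + (k + 1), by omega⟩
  rw [chainVec_eval Y i k0 hi yi k (by omega) (by omega),
      chainVec_eval Y i k0 hi yi (k+1) (by omega) (by omega)]
  rfl

theorem chainVec_end (Y : ARep K n) (i k0 : ℕ) (hi : i < n) (yi : Y.V ⟨i, hi⟩)
    (hz : ∀ hm : i + (k0 + 1) < n, pmap Y i (k0 + 1) hm yi = 0)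
    (e : Fin (n-1)) (hval : e.val = i + k0) :
    Y.f e (chainVec Y i k0 hi yi (ASrc n e)) = 0 := by
  have hb : i + k0 < n - 1 := by omega
  have he : e = ⟨i + k0, hb⟩ := Fin.ext hval
  subst he
  show Y.f ⟨i + k0, hb⟩ (chainVec Y i k0 hi yi ⟨i + k0, by omega⟩) = 0
  rw [chainVec_eval Y i k0 hi yi k0 (by omega) (by omega)]
  show pmap Y i (k0 + 1) (by omega) yi = 0
  exact hz _

/-- Lifting lemma: a morphism from a maximal interval into `Z` lifts through the
extension, provided the relevant path map of `X` is surjective. -/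
theorem lift_interval {X Y Z : ARep K n} (ext : QRep.Extension X Y Z)
    (i k0 : ℕ) (hin : i + k0 < n)
    (hsurj : ∀ hm : i + (k0 + 1) < n, Function.Surjective (pmap X i (k0 + 1) hm))
    (ι : QRep.Hom (Eij K n i (i + k0)) Z) :
    ∃ s : QRep.Hom (Eij K n i (i + k0)) Y,
      ∀ (p : Fin n) (x : (Eij K n i (i + k0)).V p),
        ext.proj.φ p (s.φ p x) = ι.φ p x := by
  have hi : i < n := by omega
  set gi := gen (K := K) i (i + k0) ⟨i, hi⟩ ⟨le_rfl, by show i ≤ i + k0; omega⟩ with gi_def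
  obtain ⟨y0, hy0⟩ := ext.surj ⟨i, hi⟩ (ι.φ ⟨i, hi⟩ gi)
  -- choose a good lift of the generator at vertex i
  have H : ∃ yi : Y.V ⟨i, hi⟩, ext.proj.φ ⟨i, hi⟩ yi = ι.φ ⟨i, hi⟩ gi ∧
      ∀ hm : i + (k0 + 1) < n, pmap Y i (k0 + 1) hm yi = 0 := by
    by_cases hm : i + (k0 + 1) < n
    · have hw : ext.proj.φ ⟨i + (k0 + 1), hm⟩ (pmap Y i (k0 + 1) hm y0) = 0 := by
        rw [pmap_hom ext.proj i (k0 + 1) hm y0, hy0, ← pmap_hom ι i (k0 + 1) hm gi,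
            ESub_elem_zero (p := ⟨i + (k0 + 1), hm⟩)
              (by show ¬ (i ≤ i + (k0+1) ∧ i + (k0+1) ≤ i + k0); omega)
              (pmap (Eij K n i (i + k0)) i (k0 + 1) hm gi),
            map_zero]
      have hker : pmap Y i (k0 + 1) hm y0 ∈
          LinearMap.range (ext.incl.φ ⟨i + (k0 + 1), hm⟩) := by
        rw [← ext.exact]
        exact LinearMap.mem_ker.mpr hw
      obtain ⟨x0, hx0⟩ := hker
      obtain ⟨ξ, hξ⟩ := hsurj hm x0
      refine ⟨y0 - ext.incl.φ ⟨i, hi⟩ ξ, ?_, ?_⟩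
      · rw [map_sub, hy0]
        have hk0 : ext.proj.φ ⟨i, hi⟩ (ext.incl.φ ⟨i, hi⟩ ξ) = 0 := by
          have : ext.incl.φ ⟨i, hi⟩ ξ ∈ LinearMap.ker (ext.proj.φ ⟨i, hi⟩) := by
            rw [ext.exact]; exact ⟨ξ, rfl⟩
          exact LinearMap.mem_ker.mp this
        rw [hk0, sub_zero]
      · intro hm'
        show pmap Y i (k0 + 1) hm (y0 - ext.incl.φ ⟨i, hi⟩ ξ) = 0
        rw [map_sub, ← pmap_hom ext.incl i (k0 + 1) hm ξ, hξ, hx0, sub_self]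
    · exact ⟨y0, hy0, fun hm' => absurd hm' hm⟩
  obtain ⟨yi, hyi1, hyi2⟩ := H
  refine ⟨⟨fun p => (LinearMap.toSpanSingleton K (Y.V p) (chainVec Y i k0 hi yi p)).comp
      ((ESub K n i (i + k0) p).subtype), ?_⟩, ?_⟩
  · -- commutation
    intro e
    apply LinearMap.ext
    intro x
    show Y.f e (((ESub K n i (i + k0) (ASrc n e)).subtype x) • chainVec Y i k0 hi yi (ASrc n e)) =
      ((ESub K n i (i + k0) (ATgt n e)).subtype ((Eij K n i (i + k0)).f e x)) •
        chainVec Y i k0 hi yi (ATgt n e)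
    by_cases hc1 : i ≤ e.val ∧ e.val ≤ i + k0
    · by_cases hc2 : e.val + 1 ≤ i + k0
      · rw [map_smul, chainVec_step Y i k0 hi yi e hc1.1 hc2]
        congr 1
        exact (toSub_val _ (ESub_top (p := ATgt n e)
          ⟨by show i ≤ e.val + 1; omega, by show e.val + 1 ≤ i + k0; omega⟩) _).symm
      · have hval : e.val = i + k0 := by omega
        rw [map_smul, chainVec_end Y i k0 hi yi hyi2 e hval, smul_zero,
            chainVec_out Y i k0 hi yi (ATgt n e)
              (by show ¬ (i ≤ e.val + 1 ∧ e.val + 1 ≤ i + k0); omega), smul_zero]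
    · rw [ESub_elem_zero (p := ASrc n e) (by show ¬ (i ≤ e.val ∧ e.val ≤ i + k0); exact hc1) x]
      have h0 : (Eij K n i (i + k0)).f e 0 = 0 := map_zero _
      rw [h0]
      show Y.f e ((0:K) • chainVec Y i k0 hi yi (ASrc n e)) = (0:K) • chainVec Y i k0 hi yi (ATgt n e)
      simp
  · -- compatibility with ι
    intro p x
    by_cases hp : i ≤ p.val ∧ p.val ≤ i + k0
    · show ext.proj.φ p (((ESub K n i (i + k0) p).subtype x) • chainVec Y i k0 hi yi p) = ι.φ p x
      obtain ⟨k, hk⟩ : ∃ k, p.val = i + k := ⟨p.val - i, by omega⟩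
      have hb : i + k < n := by omega
      have he : p = ⟨i + k, hb⟩ := Fin.ext hk
      subst he
      rw [chainVec_eval Y i k0 hi yi k hb (by omega), map_smul,
          pmap_hom ext.proj i k hb yi, hyi1, ← pmap_hom ι i k hb gi, gi_def,
          pmap_gen le_rfl (by show i ≤ i + k0; omega) hi k hb (by omega)]
      rw [← map_smul]
      congr 1
      apply Subtype.ext
      show (ESub K n i (i + k0) ⟨i + k, hb⟩).subtype x * 1 =
        (ESub K n i (i + k0) ⟨i + k, hb⟩).subtype x
      exact mul_one _
    · rw [ESub_elem_zero (p := p) hp x]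
      simp
end Aux3
section Aux4

variable {K : Type} [Field K] {ι E' : Type} {s t : E' → ι}

/-- composition of representation morphisms -/
def homComp {A B C : QRep K s t} (g : QRep.Hom B C) (f : QRep.Hom A B) : QRep.Hom A C where
  φ i := (g.φ i).comp (f.φ i)
  comm e := by
    apply LinearMap.ext; intro x
    have h1 := LinearMap.congr_fun (g.comm e) (f.φ (s e) x)
    have h2 := LinearMap.congr_fun (f.comm e) x
    simp only [LinearMap.comp_apply] at h1 h2 ⊢
    rw [h1, h2]

/-- left inclusion into a direct sum -/
def inlHom (A B : QRep K s t) : QRep.Hom A (A.dsum B) where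
  φ i := LinearMap.inl K (A.V i) (B.V i)
  comm e := by
    apply LinearMap.ext; intro x
    show ((A.f e).prodMap (B.f e)) (x, 0) = (A.f e x, 0)
    simp

/-- right inclusion into a direct sum -/
def inrHom (A B : QRep K s t) : QRep.Hom B (A.dsum B) where
  φ i := LinearMap.inr K (A.V i) (B.V i)
  comm e := by
    apply LinearMap.ext; intro x
    show ((A.f e).prodMap (B.f e)) (0, x) = (0, B.f e x)
    simp

end Aux4

section Aux5

variable {K : Type} [Field K] {n : ℕ}

theorem pmap_surj_congr {W : ARep K n} {i k k' : ℕ} (hkk : k = k')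
    (h : i + k < n) (h' : i + k' < n)
    (hs : Function.Surjective (pmap W i k h)) :
    Function.Surjective (pmap W i k' h') := by subst hkk; exact hs

/-- Lift a morphism from a direct sum of maximal intervals through the extension. -/
theorem lift_list (a : ℕ → ℕ) (hM : ∀ i < n, a i ≤ n - i)
    {X Y Z : ARep K n} (ext : QRep.Extension X Y Z)
    (hXs : ∀ (i k0 : ℕ), i < n → a i = k0 + 1 → ∀ hm : i + (k0 + 1) < n,
      Function.Surjective (pmap X i (k0 + 1) hm)) :
    ∀ (L : List (ℕ × ℕ)), (∀ pr ∈ L, pr.1 < n ∧ 1 ≤ a pr.1 ∧ pr.2 = pr.1 + a pr.1 - 1) →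
    ∀ (ι : QRep.Hom (intervalSum K n L) Z),
      ∃ s : QRep.Hom (intervalSum K n L) Y,
        ∀ (p : Fin n) (x : (intervalSum K n L).V p), ext.proj.φ p (s.φ p x) = ι.φ p x
  | [], _, ι => by
    refine ⟨⟨fun p => 0, ?_⟩, ?_⟩
    · intro e
      apply LinearMap.ext; intro x
      show Y.f e 0 = 0
      simp
    · intro p x
      have hx : x = 0 := Subsingleton.elim (α := PUnit) x 0
      rw [hx]
      simp
  | (i, j) :: L, hL, ι => by
    obtain ⟨hi0, hai0, hj0⟩ := hL (i, j) List.mem_cons_self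
    have hi : i < n := hi0
    have hai : 1 ≤ a i := hai0
    have hj : j = i + a i - 1 := hj0
    obtain ⟨k0, hk0⟩ : ∃ k0, a i = k0 + 1 := ⟨a i - 1, by omega⟩
    have hM' : a i ≤ n - i := hM i hi
    have hj' : j = i + k0 := by omega
    subst hj'
    have hin : i + k0 < n := by omega
    obtain ⟨s1, hs1⟩ := lift_interval ext i k0 hin (fun hm => hXs i k0 hi hk0 hm)
      (homComp ι (inlHom (Eij K n i (i + k0)) (intervalSum K n L)))
    obtain ⟨s2, hs2⟩ := lift_list a hM ext hXs L
      (fun q hq => hL q (List.mem_cons_of_mem _ hq))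
      (homComp ι (inrHom (Eij K n i (i + k0)) (intervalSum K n L)))
    refine ⟨⟨fun p => (s1.φ p).comp (LinearMap.fst K _ _) + (s2.φ p).comp (LinearMap.snd K _ _),
      ?_⟩, ?_⟩
    · intro e
      apply LinearMap.ext; intro x
      show Y.f e (s1.φ (ASrc n e) (Prod.fst x) + s2.φ (ASrc n e) (Prod.snd x)) =
        s1.φ (ATgt n e) ((Eij K n i (i + k0)).f e (Prod.fst x)) +
          s2.φ (ATgt n e) ((intervalSum K n L).f e (Prod.snd x))
      rw [map_add]
      congr 1
      · exact LinearMap.congr_fun (s1.comm e) (Prod.fst x)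
      · exact LinearMap.congr_fun (s2.comm e) (Prod.snd x)
    · intro p x
      show ext.proj.φ p (s1.φ p (Prod.fst x) + s2.φ p (Prod.snd x)) = ι.φ p x
      rw [map_add, hs1 p (Prod.fst x), hs2 p (Prod.snd x)]
      show ι.φ p (Prod.fst x, 0) + ι.φ p (0, Prod.snd x) = ι.φ p x
      refine (map_add (ι.φ p) _ _).symm.trans ?_
      congr 1
      have hxx : ((Prod.fst x, 0) + (0, Prod.snd x) :
          (Eij K n i (i + k0)).V p × (intervalSum K n L).V p) = (Prod.fst x, Prod.snd x) := by
        exact Prod.ext (add_zero (Prod.fst x)) (zero_add (Prod.snd x))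
      exact hxx

end Aux5

/-- if `a` is a bracket vector, `X ∈ C_a`, and `Z` is a direct sum of the
maximal intervals `E^{i,(i+a i-1)}` (with `a i ≥ 1`), then every extension of `Z` by `X`
is trivial. -/
theorem stmt16 (K : Type) [Field K] (n : ℕ) (a : ℕ → ℕ) (hM : ∀ i < n, a i ≤ n - i)
    (hbr : IsBracketVecN n a)
    (X : ARep K n) (hX : InCat K n (condF n a) X)
    (LZ : List (ℕ × ℕ))
    (hLZ : ∀ pr ∈ LZ, pr.1 < n ∧ 1 ≤ a pr.1 ∧ pr.2 = pr.1 + a pr.1 - 1)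
    (Y : ARep K n) (ext : QRep.Extension X Y (intervalSum K n LZ)) :
    ext.Trivial := by
  -- the crucial surjectivity of path maps of X
  have hXs : ∀ (i k0 : ℕ), i < n → a i = k0 + 1 → ∀ hm : i + (k0 + 1) < n,
      Function.Surjective (pmap X i (k0 + 1) hm) := by
    intro i k0 hi hk0 hm
    have hm' : i + a i < n := by omega
    exact pmap_surj_congr hk0 hm' hm (pmap_X_surj a hbr X hX i hi hm')
  -- the identity morphism of Z
  have idcomm : ∀ e, ((intervalSum K n LZ).f e).comp (LinearMap.id) =
      (LinearMap.id).comp ((intervalSum K n LZ).f e) := by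
    intro e; apply LinearMap.ext; intro x; rfl
  obtain ⟨sec, hsec⟩ := lift_list a hM ext hXs LZ hLZ ⟨fun _ => LinearMap.id, idcomm⟩
  -- hsec : proj (sec z) = z
  have hsec' : ∀ (p : Fin n) (z : (intervalSum K n LZ).V p),
      ext.proj.φ p (sec.φ p z) = z := fun p z => hsec p z
  -- the corrected projection onto X
  have hker : ∀ (p : Fin n) (y : Y.V p),
      y - sec.φ p (ext.proj.φ p y) ∈ LinearMap.range (ext.incl.φ p) := by
    intro p y
    rw [← ext.exact]
    refine LinearMap.mem_ker.mpr ?_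
    rw [map_sub, hsec' p (ext.proj.φ p y), sub_self]
  have key : ∀ (p : Fin n) (z : LinearMap.range (ext.incl.φ p)),
      ext.incl.φ p ((LinearEquiv.ofInjective (ext.incl.φ p) (ext.inj p)).symm z) =
        (z : Y.V p) := by
    intro p z
    conv_rhs => rw [← (LinearEquiv.ofInjective (ext.incl.φ p) (ext.inj p)).apply_symm_apply z]
    rw [LinearEquiv.ofInjective_apply]
  let r : ∀ p : Fin n, Y.V p →ₗ[K] X.V p := fun p =>
    ((LinearEquiv.ofInjective (ext.incl.φ p) (ext.inj p)).symm.toLinearMap).comp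
      (LinearMap.codRestrict _ (LinearMap.id - (sec.φ p).comp (ext.proj.φ p))
        (fun y => hker p y))
  have hIr : ∀ (p : Fin n) (y : Y.V p),
      ext.incl.φ p (r p y) = y - sec.φ p (ext.proj.φ p y) := by
    intro p y
    exact key p _
  have rcomm : ∀ e, (X.f e).comp (r (ASrc n e)) = (r (ATgt n e)).comp (Y.f e) := by
    intro e
    apply LinearMap.ext; intro y
    apply ext.inj (ATgt n e)
    show ext.incl.φ _ (X.f e (r (ASrc n e) y)) = ext.incl.φ _ (r (ATgt n e) (Y.f e y))
    rw [hIr]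
    have h1 := LinearMap.congr_fun (ext.incl.comm e) (r (ASrc n e) y)
    simp only [LinearMap.comp_apply] at h1
    rw [← h1, hIr]
    rw [map_sub]
    congr 1
    have h2 := LinearMap.congr_fun (sec.comm e) (ext.proj.φ (ASrc n e) y)
    have h3 := LinearMap.congr_fun (ext.proj.comm e) y
    simp only [LinearMap.comp_apply] at h2 h3
    rw [h2, h3]
  refine ⟨⟨r, rcomm⟩, ?_⟩
  intro p x
  apply ext.inj p
  show ext.incl.φ p (r p (ext.incl.φ p x)) = ext.incl.φ p x
  rw [hIr]
  have h0 : ext.proj.φ p (ext.incl.φ p x) = 0 := by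
    have hm : ext.incl.φ p x ∈ LinearMap.ker (ext.proj.φ p) := by
      rw [ext.exact]; exact ⟨x, rfl⟩
    exact LinearMap.mem_ker.mp hm
  rw [h0, map_zero, sub_zero]
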